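/- Fix nonzero reals α and δ and integers 1 ≤ r ≤ n. With S_a(n,k) = (1/(a^k k!)) Σ_{j=0}^{k} (−1)^j binom(k,j)(−ja)_n, the generalized Stirling numbers satisfy the composition law S_{αδ}(n,r) = Σ_{k=r}^n α^{k−r} S_α(n,k) S_δ(k,r). -/

import Mathlib

open Finset

/-- generalized Stirling number S_a(n,k) of Pitman -/
noncomputable def genStirling (a : ℝ) (n k : ℕ) : ℝ :=
  (1 / (a ^ k * (Nat.factorial k : ℝ))) *
    ∑ j ∈ Finset.range (k + 1),
      (-1 : ℝ) ^ j * (Nat.choose k j : ℝ) * ∏ i ∈ Finset.range n, (-(j : ℝ) * a + i)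

open fwdDiff Polynomial

/-- the function `y ↦ ∏_{i<n} (-y a + i)` -/
noncomputable def pfun (a : ℝ) (n : ℕ) : ℝ → ℝ := fun y => ∏ i ∈ Finset.range n, (-y * a + i)

lemma genStirling_eq (a : ℝ) (n k : ℕ) :
    genStirling a n k = (1 / (a ^ k * (Nat.factorial k : ℝ))) *
      ∑ j ∈ Finset.range (k + 1), (-1 : ℝ) ^ j * (Nat.choose k j : ℝ) * pfun a n (j : ℝ) := rfl

lemma alt_sum_eq_fwdDiff (f : ℝ → ℝ) (k : ℕ) :
    ∑ j ∈ Finset.range (k + 1), (-1 : ℝ) ^ j * (Nat.choose k j : ℝ) * f (j : ℝ)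
      = (-1 : ℝ) ^ k * (fwdDiff (1:ℝ))^[k] f 0 := by
  rw [fwdDiff_iter_eq_sum_shift, Finset.mul_sum]
  refine Finset.sum_congr rfl fun j hj => ?_
  have hj' : j ≤ k := Nat.lt_succ_iff.mp (Finset.mem_range.mp hj)
  have h1 : (0 : ℝ) + j • (1:ℝ) = (j : ℝ) := by simp
  rw [h1, zsmul_eq_mul]
  push_cast
  have h2 : (-1 : ℝ) ^ k = (-1 : ℝ) ^ (k - j) * (-1 : ℝ) ^ j := by
    rw [← pow_add, Nat.sub_add_cancel hj']
  have h3 : (-1:ℝ)^(k-j) * (-1:ℝ)^(k-j) = 1 := by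
    rw [← pow_add, ← two_mul, pow_mul]; norm_num
  calc (-1:ℝ)^j * (k.choose j : ℝ) * f j
      = ((-1:ℝ)^(k-j) * (-1:ℝ)^(k-j)) * ((-1:ℝ)^j * (k.choose j : ℝ) * f j) := by rw [h3]; ring
    _ = (-1:ℝ)^k * ((-1:ℝ)^(k-j) * (k.choose j : ℝ) * f j) := by rw [h2]; ring

lemma fwdDiff_poly_eval (Q : Polynomial ℝ) :
    fwdDiff (1:ℝ) (fun t => Q.eval t) = fun t => (Q.comp (X + C 1) - Q).eval t := by
  funext t
  simp [fwdDiff, Polynomial.eval_comp]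

lemma fwdDiff_iter_eval_eq_zero (r : ℕ) :
    ∀ (Q : Polynomial ℝ), Q.degree < (r : WithBot ℕ) →
      ∀ y : ℝ, (fwdDiff (1:ℝ))^[r] (fun t => Q.eval t) y = 0 := by
  induction r with
  | zero =>
      intro Q hQ y
      have hQ0 : Q = 0 := by
        by_contra h
        rw [Polynomial.degree_eq_natDegree h] at hQ
        exact absurd (by exact_mod_cast hQ : Q.natDegree < 0) (Nat.not_lt_zero _)
      simp [hQ0]
  | succ r IH =>
      intro Q hQ y
      rw [Function.iterate_succ_apply, fwdDiff_poly_eval]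
      apply IH
      by_cases h0 : Q.natDegree = 0
      · have hz : Q.comp (X + C 1) - Q = 0 := by
          rw [Polynomial.eq_C_of_natDegree_eq_zero h0]; simp
        rw [hz, Polynomial.degree_zero]
        exact_mod_cast WithBot.bot_lt_coe r
      · have hQne : Q ≠ 0 := fun h => h0 (by simp [h])
        have hX1 : (X + C (1:ℝ)).natDegree = 1 := Polynomial.natDegree_X_add_C 1
        have hdc : (Q.comp (X + C 1)).natDegree = Q.natDegree := by
          rw [Polynomial.natDegree_comp, hX1, mul_one]
        have hlc : (Q.comp (X + C 1)).leadingCoeff = Q.leadingCoeff := by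
          rw [Polynomial.leadingCoeff_comp (by rw [hX1]; exact one_ne_zero),
            (Polynomial.monic_X_add_C (1:ℝ)).leadingCoeff, one_pow, mul_one]
        have hcne : Q.comp (X + C 1) ≠ 0 := fun h => hQne
          (Polynomial.leadingCoeff_eq_zero.mp (by rw [← hlc, h, Polynomial.leadingCoeff_zero]))
        have hdeg : (Q.comp (X + C 1)).degree = Q.degree := by
          rw [Polynomial.degree_eq_natDegree hcne, Polynomial.degree_eq_natDegree hQne, hdc]
        have hlt := Polynomial.degree_sub_lt hdeg hcne hlc
        have hle : Q.degree ≤ (r : WithBot ℕ) := by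
          rw [Polynomial.degree_eq_natDegree hQne] at hQ ⊢
          have h1 : Q.natDegree < r + 1 := by exact_mod_cast hQ
          exact_mod_cast Nat.lt_succ_iff.mp h1
        exact lt_of_lt_of_le (hdeg ▸ hlt) hle

/-- the polynomial whose evaluation is `pfun a n` -/
noncomputable def Ppf (a : ℝ) (n : ℕ) : Polynomial ℝ :=
  ∏ i ∈ Finset.range n, (C (-a) * X + C (i : ℝ))

lemma pfun_eq_eval (a : ℝ) (n : ℕ) (y : ℝ) : pfun a n y = (Ppf a n).eval y := by
  simp only [pfun, Ppf, Polynomial.eval_prod, Polynomial.eval_add, Polynomial.eval_mul,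
    Polynomial.eval_C, Polynomial.eval_X]
  exact Finset.prod_congr rfl fun i _ => by ring

lemma Ppf_natDegree_le (a : ℝ) (n : ℕ) : (Ppf a n).natDegree ≤ n := by
  refine le_trans (Polynomial.natDegree_prod_le _ _) ?_
  refine le_trans (Finset.sum_le_sum fun i _ =>
    (Polynomial.natDegree_linear_le : (C (-a) * X + C (i:ℝ)).natDegree ≤ 1)) ?_
  simp

lemma Ppf_degree_le (a : ℝ) (n : ℕ) : (Ppf a n).degree ≤ (n : WithBot ℕ) :=
  le_trans Polynomial.degree_le_natDegree (by exact_mod_cast Ppf_natDegree_le a n)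

lemma pfun_one_nat (k m : ℕ) :
    pfun 1 k (m : ℝ) = (-1 : ℝ) ^ k * (Nat.choose m k : ℝ) * (Nat.factorial k : ℝ) := by
  rcases le_or_gt k m with h | h
  · have h1 : ∀ i ∈ Finset.range k, (-(m:ℝ) * 1 + i) = (-1) * ((m:ℝ) - i) := fun i _ => by ring
    rw [pfun, Finset.prod_congr rfl h1, Finset.prod_mul_distrib, Finset.prod_const,
      Finset.card_range]
    have h2 : ∏ i ∈ Finset.range k, ((m:ℝ) - i) = (m.descFactorial k : ℝ) := by
      rw [Nat.descFactorial_eq_prod_range, Nat.cast_prod]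
      refine Finset.prod_congr rfl fun i hi => ?_
      have hi' : i ≤ m := le_trans (le_of_lt (Finset.mem_range.mp hi)) h
      rw [Nat.cast_sub hi']
    rw [h2, Nat.descFactorial_eq_factorial_mul_choose]
    push_cast
    ring
  · have h0 : pfun 1 k (m:ℝ) = 0 := by
      rw [pfun]
      apply Finset.prod_eq_zero (Finset.mem_range.mpr h)
      simp
    rw [h0, Nat.choose_eq_zero_of_lt h]
    simp

lemma genStirling_vanish (δ : ℝ) (k r : ℕ) (hkr : k < r) : genStirling δ k r = 0 := by
  rw [genStirling_eq, alt_sum_eq_fwdDiff]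
  have hfun : pfun δ k = fun t => (Ppf δ k).eval t := funext fun y => pfun_eq_eval δ k y
  have hz : (fwdDiff (1:ℝ))^[r] (pfun δ k) 0 = 0 := by
    rw [hfun]
    apply fwdDiff_iter_eval_eq_zero
    refine lt_of_le_of_lt (Ppf_degree_le δ k) ?_
    exact_mod_cast hkr
  rw [hz]
  ring

lemma pfun_node (a : ℝ) (ha : a ≠ 0) (n m : ℕ) (hm : m ≤ n) :
    pfun a n (m : ℝ)
      = ∑ k ∈ Finset.range (n + 1), genStirling a n k * a ^ k * pfun 1 k (m : ℝ) := by
  have hS : ∀ k : ℕ, genStirling a n k * a ^ k * (Nat.factorial k : ℝ)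
      = (-1:ℝ)^k * (fwdDiff (1:ℝ))^[k] (pfun a n) 0 := by
    intro k
    have hfk : (Nat.factorial k : ℝ) ≠ 0 := Nat.cast_ne_zero.mpr (Nat.factorial_ne_zero k)
    rw [genStirling_eq, ← alt_sum_eq_fwdDiff]
    field_simp
  have step : ∀ k ∈ Finset.range (n+1), genStirling a n k * a ^ k * pfun 1 k (m:ℝ)
      = (Nat.choose m k : ℝ) * (fwdDiff (1:ℝ))^[k] (pfun a n) 0 := by
    intro k _
    rw [pfun_one_nat]
    have hneg : (-1:ℝ)^k * (-1:ℝ)^k = 1 := by rw [← pow_add, ← two_mul, pow_mul]; norm_num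
    calc genStirling a n k * a ^ k * ((-1:ℝ)^k * (Nat.choose m k : ℝ) * (Nat.factorial k : ℝ))
        = (genStirling a n k * a ^ k * (Nat.factorial k : ℝ)) * (-1:ℝ)^k
            * (Nat.choose m k : ℝ) := by ring
      _ = ((-1:ℝ)^k * (fwdDiff (1:ℝ))^[k] (pfun a n) 0) * (-1:ℝ)^k * (Nat.choose m k : ℝ) := by
          rw [hS k]
      _ = ((-1:ℝ)^k * (-1:ℝ)^k) * ((fwdDiff (1:ℝ))^[k] (pfun a n) 0 * (Nat.choose m k : ℝ)) := by
          ring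
      _ = (Nat.choose m k : ℝ) * (fwdDiff (1:ℝ))^[k] (pfun a n) 0 := by rw [hneg]; ring
  rw [Finset.sum_congr rfl step]
  have GN := shift_eq_sum_fwdDiff_iter (1:ℝ) (pfun a n) m 0
  have h0 : (0:ℝ) + m • (1:ℝ) = (m : ℝ) := by simp
  rw [h0] at GN
  rw [GN]
  simp_rw [nsmul_eq_mul]
  apply Finset.sum_subset (Finset.range_subset_range.mpr (by omega))
  intro k hk hk'
  have hmk : m < k := by
    simp only [Finset.mem_range] at hk hk'
    omega
  rw [Nat.choose_eq_zero_of_lt hmk]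
  simp

lemma pfun_expand (a : ℝ) (ha : a ≠ 0) (n : ℕ) (y : ℝ) :
    pfun a n y = ∑ k ∈ Finset.range (n + 1), genStirling a n k * a ^ k * pfun 1 k y := by
  have key : Ppf a n
      = ∑ k ∈ Finset.range (n + 1), C (genStirling a n k * a ^ k) * Ppf 1 k := by
    apply Polynomial.eq_of_degrees_lt_of_eval_index_eq (v := (Nat.cast : ℕ → ℝ))
      (Finset.range (n+1))
    · exact fun x _ y _ h => Nat.cast_injective h
    · rw [Finset.card_range]
      refine lt_of_le_of_lt (Ppf_degree_le a n) ?_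
      exact_mod_cast Nat.lt_succ_self n
    · rw [Finset.card_range]
      refine lt_of_le_of_lt (Polynomial.degree_sum_le _ _) ?_
      refine (Finset.sup_lt_iff (by exact_mod_cast WithBot.bot_lt_coe (n+1))).mpr ?_
      intro k hk
      have hk' : k ≤ n := Nat.lt_succ_iff.mp (Finset.mem_range.mp hk)
      have hb : (C (genStirling a n k * a ^ k) * Ppf 1 k).degree ≤ (k : WithBot ℕ) := by
        refine le_trans (Polynomial.degree_mul_le _ _) ?_
        refine le_trans (add_le_add Polynomial.degree_C_le (Ppf_degree_le 1 k)) ?_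
        rw [zero_add]
      refine lt_of_le_of_lt hb ?_
      exact_mod_cast Nat.lt_succ_of_le hk'
    · intro m hm
      have hm' : m ≤ n := Nat.lt_succ_iff.mp (Finset.mem_range.mp hm)
      rw [Polynomial.eval_finset_sum]
      simp only [Polynomial.eval_mul, Polynomial.eval_C]
      rw [← pfun_eq_eval]
      have := pfun_node a ha n m hm'
      rw [this]
      exact Finset.sum_congr rfl fun k _ => by rw [← pfun_eq_eval]
  rw [pfun_eq_eval, key, Polynomial.eval_finset_sum]
  exact Finset.sum_congr rfl fun k _ => by
    rw [Polynomial.eval_mul, Polynomial.eval_C, ← pfun_eq_eval]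

/-- composition law for generalized Stirling numbers:
S_{αδ}(n,r) = Σ_{k=r}^n α^{k−r} S_α(n,k) S_δ(k,r). -/
theorem genStirling_composition (α δ : ℝ) (hα : α ≠ 0) (hδ : δ ≠ 0)
    (n r : ℕ) (hr : 1 ≤ r) (hrn : r ≤ n) :
    genStirling (α * δ) n r
      = ∑ k ∈ Finset.Icc r n, α ^ (k - r) * genStirling α n k * genStirling δ k r := by
  have hfr : (Nat.factorial r : ℝ) ≠ 0 := Nat.cast_ne_zero.mpr (Nat.factorial_ne_zero r)
  have key : ∀ j : ℕ, pfun (α * δ) n (j : ℝ)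
      = ∑ k ∈ Finset.range (n + 1), genStirling α n k * α ^ k * pfun δ k (j : ℝ) := by
    intro j
    have h1 : pfun (α * δ) n (j:ℝ) = pfun α n ((j:ℝ) * δ) := by
      unfold pfun
      exact Finset.prod_congr rfl fun i _ => by ring
    rw [h1, pfun_expand α hα n]
    refine Finset.sum_congr rfl fun k _ => ?_
    congr 1
    unfold pfun
    exact Finset.prod_congr rfl fun i _ => by ring
  rw [genStirling_eq]
  simp_rw [key, Finset.mul_sum]
  rw [Finset.sum_comm]
  have hterm : ∀ k ∈ Finset.range (n+1),
      ∑ j ∈ Finset.range (r+1), (1 / ((α*δ)^r * (Nat.factorial r : ℝ))) *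
        ((-1:ℝ)^j * (Nat.choose r j : ℝ) * (genStirling α n k * α^k * pfun δ k (j:ℝ)))
      = genStirling α n k * α ^ k / α ^ r * genStirling δ k r := by
    intro k _
    rw [← Finset.mul_sum]
    have hB : ∑ j ∈ Finset.range (r+1),
          (-1:ℝ)^j * (Nat.choose r j : ℝ) * (genStirling α n k * α^k * pfun δ k (j:ℝ))
        = genStirling α n k * α^k
            * ∑ j ∈ Finset.range (r+1), (-1:ℝ)^j * (Nat.choose r j : ℝ) * pfun δ k (j:ℝ) := by
      rw [Finset.mul_sum]; exact Finset.sum_congr rfl fun j _ => by ring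
    rw [hB, genStirling_eq δ k r, mul_pow]
    have hd : (δ:ℝ)^r ≠ 0 := pow_ne_zero _ hδ
    have ha : (α:ℝ)^r ≠ 0 := pow_ne_zero _ hα
    field_simp
  rw [Finset.sum_congr rfl hterm]
  have hsplit : ∑ k ∈ Finset.range (n+1), genStirling α n k * α^k / α^r * genStirling δ k r
      = ∑ k ∈ Finset.Icc r n, genStirling α n k * α^k / α^r * genStirling δ k r := by
    symm
    apply Finset.sum_subset
    · intro k hk
      simp only [Finset.mem_Icc] at hk
      simp only [Finset.mem_range]
      omega
    · intro k hk hk'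
      have hkr : k < r := by
        simp only [Finset.mem_Icc] at hk'
        simp only [Finset.mem_range] at hk
        omega
      rw [genStirling_vanish δ k r hkr]
      ring
  rw [hsplit]
  refine Finset.sum_congr rfl fun k hk => ?_
  have hrk : r ≤ k := (Finset.mem_Icc.mp hk).1
  rw [pow_sub₀ α hα hrk]
  ring
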